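/- arXiv:1506.07346 — 5 statements merged into one kernel-verified Lean document; each statement's English description precedes it below -/
import Mathlib

section
/- Let N be a solid quasi-norm functional on measurable functions on X, and let f, f_n : X → ℂ (n ∈ ℕ) be measurable functions with N(f_n − f) → 0 as n → ∞. Then for μ-a.e. x ∈ X there exists a strictly increasing sequence of indices (n_k) (which may depend on x) such that f_{n_k}(x) → f(x) as k → ∞. -/
open MeasureTheory Filter Topology
open scoped ENNReal NNReal

noncomputable section

/-- If `N` is a solid quasi-norm functional on measurable functions on `X`
(`N g = 0` implies `g = 0` a.e., and `|f| ≤ |g|` a.e. implies `N f ≤ N g`), and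
`N (fₙ - f) → 0`, then for a.e. `x` there is a subsequence (possibly depending on `x`)
along which `fₙ(x) → f(x)`. -/
theorem solid_quasinorm_convergence_ae_subseq
    {X : Type*} [MeasurableSpace X] (μ : Measure X)
    (N : (X → ℂ) → ℝ≥0∞)
    (hzero : ∀ g : X → ℂ, Measurable g → N g = 0 → g =ᵐ[μ] 0)
    (hsolid : ∀ f g : X → ℂ, Measurable f → Measurable g →
      (∀ᵐ x ∂μ, ‖f x‖ ≤ ‖g x‖) → N f ≤ N g)
    (f : X → ℂ) (F : ℕ → X → ℂ)
    (hf : Measurable f) (hF : ∀ n, Measurable (F n))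
    (hconv : Tendsto (fun n => N (F n - f)) atTop (nhds 0)) :
    ∀ᵐ x ∂μ, ∃ φ : ℕ → ℕ, StrictMono φ ∧
      Tendsto (fun k => F (φ k) x) atTop (nhds (f x)) := by
  -- the infimum of the norms of `F (n+m) - f` over `n`, as an `ℝ≥0∞`-valued function
  set H : ℕ → X → ℝ≥0∞ := fun m x => ⨅ n, (‖F (n + m) x - f x‖₊ : ℝ≥0∞) with hH
  have hHle : ∀ m x n, H m x ≤ (‖F (n + m) x - f x‖₊ : ℝ≥0∞) := fun m x n => iInf_le _ n
  have hHtop : ∀ m x, H m x ≠ ⊤ := fun m x =>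
    ne_top_of_le_ne_top ENNReal.coe_ne_top (hHle m x 0)
  have hHmeas : ∀ m, Measurable (H m) := by
    intro m
    exact Measurable.iInf fun n => ((hF (n + m)).sub hf).nnnorm.coe_nnreal_ennreal
  -- the complex embedding
  set g : ℕ → X → ℂ := fun m x => ((H m x).toReal : ℂ) with hg
  have hgmeas : ∀ m, Measurable (g m) := fun m =>
    Complex.measurable_ofReal.comp (hHmeas m).ennreal_toReal
  have hgnorm : ∀ m x, ‖g m x‖ = (H m x).toReal := by
    intro m x
    simp [hg, Real.norm_eq_abs, abs_of_nonneg ENNReal.toReal_nonneg]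
  -- N (g m) = 0
  have hNg : ∀ m, N (g m) = 0 := by
    intro m
    have hle : ∀ n ≥ m, N (g m) ≤ N (F n - f) := by
      intro n hn
      refine hsolid _ _ (hgmeas m) ((hF n).sub hf) (ae_of_all _ fun x => ?_)
      rw [hgnorm]
      have h1 : H m x ≤ (‖F ((n - m) + m) x - f x‖₊ : ℝ≥0∞) := hHle m x (n - m)
      rw [Nat.sub_add_cancel hn] at h1
      have := (ENNReal.toReal_le_toReal (hHtop m x) ENNReal.coe_ne_top).mpr h1
      simpa using this
    have : N (g m) ≤ 0 :=
      ge_of_tendsto hconv (eventually_atTop.2 ⟨m, hle⟩)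
    exact le_antisymm this (by simp)
  -- so g m = 0 a.e., for all m simultaneously
  have hae : ∀ᵐ x ∂μ, ∀ m, g m x = 0 := by
    rw [ae_all_iff]
    intro m
    exact hzero _ (hgmeas m) (hNg m)
  filter_upwards [hae] with x hx
  -- at such x, H m x = 0 for all m
  have hH0 : ∀ m, H m x = 0 := by
    intro m
    have := hx m
    rw [hg] at this
    simp only [Complex.ofReal_eq_zero] at this
    rcases (ENNReal.toReal_eq_zero_iff _).mp this with h | h
    · exact h
    · exact absurd h (hHtop m x)
  -- frequently small
  have hfreq : ∀ k : ℕ, ∃ᶠ n in atTop, ‖F n x - f x‖ < 1 / (k + 1) := by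
    intro k
    rw [frequently_atTop]
    intro m
    have hpos : (0 : ℝ) < 1 / (k + 1) := by positivity
    have : H m x < ENNReal.ofReal (1 / (k + 1)) := by
      rw [hH0 m]; exact ENNReal.ofReal_pos.mpr hpos
    obtain ⟨n, hn⟩ := iInf_lt_iff.mp this
    refine ⟨n + m, le_add_self, ?_⟩
    rw [← ENNReal.ofReal_coe_nnreal, coe_nnnorm] at hn
    exact (ENNReal.ofReal_lt_ofReal_iff hpos).mp hn
  obtain ⟨φ, hφmono, hφ⟩ := Filter.extraction_forall_of_frequently hfreq
  refine ⟨φ, hφmono, ?_⟩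
  rw [tendsto_iff_norm_sub_tendsto_zero]
  refine squeeze_zero (fun k => norm_nonneg _) (fun k => (hφ k).le) ?_
  exact tendsto_one_div_add_atTop_nhds_zero_nat
end
end

section
/- Let Y be a rich solid QBF-space on X with quasi-norm constant C_Y and U = {U_i}_{i∈I} an admissible covering of X. Then ‖·|Y♭‖ is a quasi-norm on Y♭(U) with quasi-norm constant C_Y; Y♭(U) is solid in the sense that if |λ_i| ≤ |κ_i| for all i ∈ I and κ ∈ Y♭(U), then λ ∈ Y♭(U) with ‖λ|Y♭‖ ≤ ‖κ|Y♭‖; Y♭(U) contains all finitely supported sequences; and Y♭(U) is complete: every sequence (Λ_n) in Y♭(U) with ‖Λ_n − Λ_m|Y♭‖ → 0 as n,m → ∞ converges in ‖·|Y♭‖ to some Λ ∈ Y♭(U). The same statements hold for Y♮(U). -/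
open MeasureTheory Filter Topology
open scoped ENNReal NNReal

noncomputable section

/-- Model of a rich solid quasi-Banach function space `Y` on `(X, μ)`: `Y` is described by a
solid quasi-norm functional `N` on nonnegative extended-real valued functions (a measurable
`F : X → ℂ` belongs to `Y` iff `N (fun x => ‖F x‖₊) ≠ ∞`). -/
structure QBF (X : Type*) [MeasurableSpace X] (μ : MeasureTheory.Measure X) where
  /-- the quasi-norm functional -/
  N : (X → ℝ≥0∞) → ℝ≥0∞
  /-- the quasi-norm constant `C_Y` -/
  C : ℝ≥0∞
  one_le_C : 1 ≤ C
  C_ne_top : C ≠ ⊤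
  /-- solidity -/
  mono : ∀ f g : X → ℝ≥0∞, Measurable f → Measurable g →
    (∀ᵐ x ∂μ, f x ≤ g x) → N f ≤ N g
  /-- quasi-triangle inequality with constant `C_Y` -/
  add_le : ∀ f g : X → ℝ≥0∞, Measurable f → Measurable g →
    N (fun x => f x + g x) ≤ C * (N f + N g)
  /-- homogeneity -/
  smul_eq : ∀ (c : ℝ≥0∞) (f : X → ℝ≥0∞), Measurable f → N (fun x => c * f x) = c * N f
  /-- definiteness (up to a.e. equality) -/
  eq_zero : ∀ f : X → ℝ≥0∞, Measurable f → N f = 0 → f =ᵐ[μ] 0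
  /-- completeness of `Y` -/
  complete : ∀ F : ℕ → X → ℂ, (∀ n, Measurable (F n)) →
    (∀ n, N (fun x => (‖F n x‖₊ : ℝ≥0∞)) ≠ ⊤) →
    Filter.Tendsto (fun q : ℕ × ℕ => N (fun x => (‖F q.1 x - F q.2 x‖₊ : ℝ≥0∞)))
      Filter.atTop (nhds 0) →
    ∃ G : X → ℂ, Measurable G ∧ N (fun x => (‖G x‖₊ : ℝ≥0∞)) ≠ ⊤ ∧
      Filter.Tendsto (fun n => N (fun x => (‖F n x - G x‖₊ : ℝ≥0∞)))
        Filter.atTop (nhds 0)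

/-- An admissible covering of `X`: a locally finite covering by measurable, relatively
compact sets with nonempty interior and finite intersection number `σ`. -/
structure AdmissibleCovering {X : Type*} [TopologicalSpace X] [MeasurableSpace X]
    {I : Type*} (U : I → Set X) (σ : ℕ) : Prop where
  meas : ∀ i, MeasurableSet (U i)
  rel_compact : ∀ i, IsCompact (closure (U i))
  interior_nonempty : ∀ i, (interior (U i)).Nonempty
  covers : (⋃ i, U i) = Set.univ
  locFin : LocallyFinite U
  inter_finite : ∀ i, {j | (U i ∩ U j).Nonempty}.Finite
  inter_card_le : ∀ i, {j | (U i ∩ U j).Nonempty}.ncard ≤ σ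

variable {X : Type*} [TopologicalSpace X] [MeasurableSpace X] {μ : MeasureTheory.Measure X}

/-- The `Y♭(U)` quasi-norm of a sequence `λ`: `‖Σᵢ |λᵢ| χ_{Uᵢ} | Y‖`. -/
def flatN (Q : QBF X μ) {I : Type*} (U : I → Set X) (lam : I → ℂ) : ℝ≥0∞ :=
  Q.N (fun x => ∑' i, (U i).indicator (fun _ => (‖lam i‖₊ : ℝ≥0∞)) x)

/-- The `Y♮(U)` quasi-norm of a sequence `λ`: `‖Σᵢ |λᵢ| μ(Uᵢ)⁻¹ χ_{Uᵢ} | Y‖`. -/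
def natN (Q : QBF X μ) {I : Type*} (U : I → Set X) (lam : I → ℂ) : ℝ≥0∞ :=
  Q.N (fun x => ∑' i, (U i).indicator (fun _ => (‖lam i‖₊ : ℝ≥0∞) / μ (U i)) x)

section Aux
set_option linter.unusedSectionVars false

/-- Generalized weighted sequence quasi-norm: `‖Σᵢ wᵢ |λᵢ| χ_{Uᵢ} | Y‖`. -/
def gN (Q : QBF X μ) {I : Type*} (U : I → Set X) (w : I → ℝ≥0∞) (lam : I → ℂ) : ℝ≥0∞ :=
  Q.N (fun x => ∑' i, (U i).indicator (fun _ => w i * (‖lam i‖₊ : ℝ≥0∞)) x)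

theorem flatN_eq_gN (Q : QBF X μ) {I : Type*} (U : I → Set X) (lam : I → ℂ) :
    flatN Q U lam = gN Q U (fun _ => 1) lam := by
  unfold flatN gN; simp [one_mul]

theorem natN_eq_gN (Q : QBF X μ) {I : Type*} (U : I → Set X) (lam : I → ℂ) :
    natN Q U lam = gN Q U (fun i => (μ (U i))⁻¹) lam := by
  unfold natN gN
  congr 1; funext x; congr 1; funext i; congr 1; funext y
  rw [ENNReal.div_eq_inv_mul]

theorem QBF.N_zero (Q : QBF X μ) : Q.N (fun _ => 0) = 0 := by
  have := Q.smul_eq 0 (fun _ => 0) measurable_const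
  simpa using this

theorem QBF.N_congr_ae (Q : QBF X μ) {f g : X → ℝ≥0∞} (hf : Measurable f) (hg : Measurable g)
    (h : f =ᵐ[μ] g) : Q.N f = Q.N g :=
  le_antisymm (Q.mono _ _ hf hg h.le) (Q.mono _ _ hg hf h.symm.le)

theorem QBF.N_eq_zero_of_ae (Q : QBF X μ) {f : X → ℝ≥0∞} (hf : Measurable f)
    (h : f =ᵐ[μ] 0) : Q.N f = 0 := by
  rw [Q.N_congr_ae hf measurable_const h]; exact Q.N_zero

theorem QBF.N_sum_le (Q : QBF X μ) {κ : Type*} (s : Finset κ) (g : κ → X → ℝ≥0∞)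
    (hg : ∀ k, Measurable (g k)) :
    Q.N (fun x => ∑ k ∈ s, g k x) ≤ Q.C ^ s.card * ∑ k ∈ s, Q.N (g k) := by
  classical
  induction s using Finset.induction_on with
  | empty => simp [Q.N_zero]
  | @insert a s ha ih =>
    have hms : Measurable (fun x => ∑ k ∈ s, g k x) :=
      Finset.measurable_sum s fun k _ => hg k
    have h1 : Q.N (fun x => ∑ k ∈ insert a s, g k x)
        ≤ Q.C * (Q.N (g a) + Q.N (fun x => ∑ k ∈ s, g k x)) := by
      have := Q.add_le (g a) (fun x => ∑ k ∈ s, g k x) (hg a) hms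
      simp only [Finset.sum_insert ha]
      exact this
    have hC1 : (1 : ℝ≥0∞) ≤ Q.C ^ s.card := one_le_pow_of_one_le' Q.one_le_C _
    calc Q.N (fun x => ∑ k ∈ insert a s, g k x)
        ≤ Q.C * (Q.N (g a) + Q.N (fun x => ∑ k ∈ s, g k x)) := h1
      _ ≤ Q.C * (Q.C ^ s.card * Q.N (g a) + Q.C ^ s.card * ∑ k ∈ s, Q.N (g k)) := by
          gcongr
          · exact le_mul_of_one_le_left (zero_le) hC1
      _ = Q.C ^ (insert a s).card * ∑ k ∈ insert a s, Q.N (g k) := by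
          rw [Finset.card_insert_of_notMem ha, Finset.sum_insert ha, pow_succ,
            ← mul_add]
          ring

theorem AdmissibleCovering.countable_index {I : Type*} {U : I → Set X} {σ : ℕ}
    [SigmaCompactSpace X] (hU : AdmissibleCovering U σ) : Countable I :=
  Set.countable_univ_iff.mp <| hU.locFin.countable_univ fun i =>
    (hU.interior_nonempty i).imp fun _ hx => interior_subset hx

theorem meas_tsum_ind {I : Type*} [Countable I] {U : I → Set X}
    (hm : ∀ i, MeasurableSet (U i)) (c : I → ℝ≥0∞) :
    Measurable (fun x => ∑' i, (U i).indicator (fun _ => c i) x) :=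
  Measurable.ennreal_tsum fun i => measurable_const.indicator (hm i)

/-- The indicator `χ_S` as an `ℝ≥0∞`-valued function. -/
def chi (S : Set X) : X → ℝ≥0∞ := S.indicator (fun _ => 1)

theorem chi_measurable {S : Set X} (hS : MeasurableSet S) : Measurable (chi S) :=
  measurable_const.indicator hS

section Covering

variable {I : Type*} {U : I → Set X} {σ : ℕ}

theorem AdmissibleCovering.measure_pos [SigmaCompactSpace X]
    (hsupp : ∀ V : Set X, IsOpen V → V.Nonempty → 0 < μ V)
    (hU : AdmissibleCovering U σ) (i : I) : 0 < μ (U i) :=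
  lt_of_lt_of_le (hsupp _ isOpen_interior (hU.interior_nonempty i))
    (measure_mono interior_subset)

theorem AdmissibleCovering.measure_ne_top [IsFiniteMeasureOnCompacts μ]
    (hU : AdmissibleCovering U σ) (i : I) : μ (U i) ≠ ⊤ :=
  (lt_of_le_of_lt (measure_mono subset_closure) (hU.rel_compact i).measure_lt_top).ne

theorem N_chiU_ne_top (Q : QBF X μ) [OpensMeasurableSpace X]
    (hrich : ∀ K : Set X, IsCompact K → Q.N (K.indicator fun _ => 1) ≠ ⊤)
    (hU : AdmissibleCovering U σ) (i : I) : Q.N (chi (U i)) ≠ ⊤ := by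
  refine ne_top_of_le_ne_top (hrich _ (hU.rel_compact i)) ?_
  refine Q.mono _ _ (chi_measurable (hU.meas i))
    (measurable_const.indicator isClosed_closure.measurableSet) (ae_of_all _ ?_)
  exact fun x => Set.indicator_le_indicator_of_subset subset_closure
    (fun _ => zero_le) x

theorem N_chiU_pos [SigmaCompactSpace X] (Q : QBF X μ)
    (hsupp : ∀ V : Set X, IsOpen V → V.Nonempty → 0 < μ V)
    (hU : AdmissibleCovering U σ) (i : I) : Q.N (chi (U i)) ≠ 0 := by
  intro h0
  have hae := Q.eq_zero _ (chi_measurable (hU.meas i)) h0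
  have : μ (U i) = 0 := by
    refine measure_mono_null ?_ hae
    intro x hx
    simp only [Set.mem_setOf_eq, Set.mem_compl_iff]
    intro h
    have : chi (U i) x = 1 := Set.indicator_of_mem hx _
    rw [h] at this
    simp at this
  exact absurd this (hU.measure_pos hsupp i).ne'

/-- Coordinate lower bound. -/
theorem coord_le [SigmaCompactSpace X] (Q : QBF X μ) (hU : AdmissibleCovering U σ)
    (w : I → ℝ≥0∞) (lam : I → ℂ) (i : I) :
    (w i * (‖lam i‖₊ : ℝ≥0∞)) * Q.N (chi (U i)) ≤ gN Q U w lam := by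
  have hc : Countable I := hU.countable_index
  have heq : (fun x => (w i * (‖lam i‖₊ : ℝ≥0∞)) * chi (U i) x)
      = fun x => (U i).indicator (fun _ => w i * (‖lam i‖₊ : ℝ≥0∞)) x := by
    funext x
    by_cases hx : x ∈ U i <;> simp [chi, Set.indicator_of_mem, Set.indicator_of_notMem, hx]
  calc (w i * (‖lam i‖₊ : ℝ≥0∞)) * Q.N (chi (U i))
      = Q.N (fun x => (U i).indicator (fun _ => w i * (‖lam i‖₊ : ℝ≥0∞)) x) := by
        rw [← Q.smul_eq _ _ (chi_measurable (hU.meas i)), heq]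
    _ ≤ gN Q U w lam := by
        refine Q.mono _ _ (measurable_const.indicator (hU.meas i))
          (meas_tsum_ind hU.meas _) (ae_of_all _ fun x => ?_)
        exact ENNReal.le_tsum i

end Covering

section Coloring

variable {I : Type*}

/-- Greedy coloring of the intersection graph. -/
noncomputable def greedyCol (emb : I → ℕ) (nb : I → Finset I) (i : I) : ℕ :=
  sInf {k | ∀ j ∈ nb i, emb j < emb i → greedyCol emb nb j ≠ k}
termination_by emb i
decreasing_by assumption

theorem greedyCol_allowed_nonempty (emb : I → ℕ) (nb : I → Finset I) (i : I) :
    {k | ∀ j ∈ nb i, emb j < emb i → greedyCol emb nb j ≠ k}.Nonempty := by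
  refine ⟨(nb i).sup (greedyCol emb nb) + 1, fun j hj _ => ?_⟩
  have : greedyCol emb nb j ≤ (nb i).sup (greedyCol emb nb) := Finset.le_sup hj
  omega

theorem greedyCol_mem (emb : I → ℕ) (nb : I → Finset I) (i : I) :
    greedyCol emb nb i ∈ {k | ∀ j ∈ nb i, emb j < emb i → greedyCol emb nb j ≠ k} := by
  rw [greedyCol]
  exact Nat.sInf_mem (greedyCol_allowed_nonempty emb nb i)

theorem greedyCol_lt (emb : I → ℕ) (nb : I → Finset I) {σ : ℕ} (i : I)
    (hi : i ∈ nb i) (hcard : (nb i).card ≤ σ) : greedyCol emb nb i < σ := by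
  classical
  set F : Finset ℕ := ((nb i).erase i).image (greedyCol emb nb) with hF
  have hFcard : F.card ≤ σ - 1 := by
    calc F.card ≤ ((nb i).erase i).card := Finset.card_image_le
      _ = (nb i).card - 1 := Finset.card_erase_of_mem hi
      _ ≤ σ - 1 := Nat.sub_le_sub_right hcard 1
  have hcard1 : 1 ≤ (nb i).card := Finset.card_pos.mpr ⟨i, hi⟩
  obtain ⟨k, hkσ, hkF⟩ : ∃ k, k < σ ∧ k ∉ F := by
    by_contra h
    push_neg at h
    have hsub : Finset.range σ ⊆ F := fun k hk => h k (Finset.mem_range.mp hk)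
    have := Finset.card_le_card hsub
    rw [Finset.card_range] at this
    omega
  have hkmem : k ∈ {k | ∀ j ∈ nb i, emb j < emb i → greedyCol emb nb j ≠ k} := by
    intro j hj hlt
    have hji : j ≠ i := by
      intro h; rw [h] at hlt; omega
    intro hc
    exact hkF (Finset.mem_image.mpr ⟨j, Finset.mem_erase.mpr ⟨hji, hj⟩, hc⟩)
  calc greedyCol emb nb i ≤ k := by rw [greedyCol]; exact Nat.sInf_le hkmem
    _ < σ := hkσ

theorem greedyCol_ne (emb : I → ℕ) (hemb : Function.Injective emb)
    (nb : I → Finset I) {i j : I} (hij : i ≠ j) (hj : j ∈ nb i) (hi : i ∈ nb j) :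
    greedyCol emb nb i ≠ greedyCol emb nb j := by
  rcases lt_trichotomy (emb i) (emb j) with h | h | h
  · exact greedyCol_mem emb nb j i hi h
  · exact absurd (hemb h) hij
  · exact fun hc => (greedyCol_mem emb nb i) j hj h hc.symm

end Coloring

section Slices

variable {I : Type*} (U : I → Set X) (w : I → ℝ≥0∞) (col : I → ℕ) (k : ℕ)

/-- The color-`k` slice of the synthesis operator, as a `ℂ`-valued function. -/
def Fc (lam : I → ℂ) : X → ℂ := fun x =>
  ∑' i, if col i = k then (U i).indicator (fun _ => (((w i).toReal : ℝ) : ℂ) * lam i) x else 0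

/-- The color-`k` slice of the `ℝ≥0∞`-valued synthesis. -/
def hsl (lam : I → ℂ) : X → ℝ≥0∞ := fun x =>
  ∑' i, if col i = k then (U i).indicator (fun _ => w i * (‖lam i‖₊ : ℝ≥0∞)) x else 0

variable {U col k}

theorem Fc_eq_of_mem (hdisj : ∀ i j, col i = col j → (U i ∩ U j).Nonempty → i = j) (lam : I → ℂ) {i : I} {x : X} (hik : col i = k) (hx : x ∈ U i) :
    Fc U w col k lam x = (((w i).toReal : ℝ) : ℂ) * lam i := by
  unfold Fc
  rw [tsum_eq_single i ?_]
  · simp [hik, Set.indicator_of_mem hx]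
  · intro j hji
    by_cases hjk : col j = k
    · have hxj : x ∉ U j := fun hxj => hji (hdisj j i (hjk.trans hik.symm) ⟨x, hxj, hx⟩)
      simp [hjk, Set.indicator_of_notMem hxj]
    · simp [hjk]

theorem Fc_eq_zero (lam : I → ℂ) {x : X} (h : ∀ i, col i = k → x ∉ U i) :
    Fc U w col k lam x = 0 := by
  unfold Fc
  have : (fun i => if col i = k
      then (U i).indicator (fun _ => (((w i).toReal : ℝ) : ℂ) * lam i) x else 0)
      = fun _ => (0 : ℂ) := by
    funext i
    by_cases hik : col i = k
    · simp [hik, Set.indicator_of_notMem (h i hik)]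
    · simp [hik]
  rw [this, tsum_zero]

theorem hsl_le (lam : I → ℂ) (x : X) :
    hsl U w col k lam x ≤ ∑' i, (U i).indicator (fun _ => w i * (‖lam i‖₊ : ℝ≥0∞)) x := by
  refine ENNReal.tsum_le_tsum fun i => ?_
  split_ifs with h
  · exact le_rfl
  · exact zero_le

theorem hsl_measurable [Countable I] (hm : ∀ i, MeasurableSet (U i)) (lam : I → ℂ) :
    Measurable (hsl U w col k lam) := by
  refine Measurable.ennreal_tsum fun i => ?_
  split_ifs with h
  · exact measurable_const.indicator (hm i)
  · exact measurable_const

theorem Fc_nnnorm (hdisj : ∀ i j, col i = col j → (U i ∩ U j).Nonempty → i = j) (hwt : ∀ i, w i ≠ ⊤) (lam : I → ℂ) (x : X) :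
    ((‖Fc U w col k lam x‖₊ : ℝ≥0∞)) = hsl U w col k lam x := by
  by_cases hex : ∃ i, col i = k ∧ x ∈ U i
  · obtain ⟨i, hik, hx⟩ := hex
    rw [Fc_eq_of_mem w hdisj lam hik hx]
    have hr : hsl U w col k lam x = w i * (‖lam i‖₊ : ℝ≥0∞) := by
      unfold hsl
      rw [tsum_eq_single i ?_]
      · simp [hik, Set.indicator_of_mem hx]
      · intro j hji
        by_cases hjk : col j = k
        · have hxj : x ∉ U j := fun hxj => hji (hdisj j i (hjk.trans hik.symm) ⟨x, hxj, hx⟩)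
          simp [hjk, Set.indicator_of_notMem hxj]
        · simp [hjk]
    rw [hr, nnnorm_mul]
    push_cast
    rw [Complex.nnnorm_real, ← enorm_eq_nnnorm, Real.enorm_eq_ofReal ENNReal.toReal_nonneg,
      ENNReal.ofReal_toReal (hwt i)]
  · push_neg at hex
    rw [Fc_eq_zero w lam hex]
    have hr : hsl U w col k lam x = 0 := by
      unfold hsl
      refine ENNReal.tsum_eq_zero.mpr fun i => ?_
      by_cases hjk : col i = k
      · simp [hjk, Set.indicator_of_notMem (hex i hjk)]
      · simp [hjk]
    rw [hr]
    simp

theorem Fc_sub (hdisj : ∀ i j, col i = col j → (U i ∩ U j).Nonempty → i = j) (hwt : ∀ i, w i ≠ ⊤) (lam kap : I → ℂ) (x : X) :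
    Fc U w col k (lam - kap) x = Fc U w col k lam x - Fc U w col k kap x := by
  by_cases hex : ∃ i, col i = k ∧ x ∈ U i
  · obtain ⟨i, hik, hx⟩ := hex
    rw [Fc_eq_of_mem w hdisj _ hik hx, Fc_eq_of_mem w hdisj _ hik hx,
      Fc_eq_of_mem w hdisj _ hik hx]
    simp [Pi.sub_apply]
    ring
  · push_neg at hex
    rw [Fc_eq_zero w _ hex, Fc_eq_zero w _ hex, Fc_eq_zero w _ hex]
    simp

theorem Fc_measurable [Countable I] [Nonempty I] (hdisj : ∀ i j, col i = col j → (U i ∩ U j).Nonempty → i = j) (hm : ∀ i, MeasurableSet (U i))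
    (lam : I → ℂ) : Measurable (Fc U w col k lam) := by
  obtain ⟨emb, hemb⟩ := exists_injective_nat I
  classical
  set term : I → X → ℂ := fun i x =>
    if col i = k then (U i).indicator (fun _ => (((w i).toReal : ℝ) : ℂ) * lam i) x else 0
    with hterm
  have hmeas_term : ∀ i, Measurable (term i) := by
    intro i
    simp only [hterm]
    split_ifs with h
    · exact measurable_const.indicator (hm i)
    · exact measurable_const
  set s : ℕ → Finset I := fun n => Finset.preimage (Finset.range n) emb hemb.injOn with hs
  have hmem : ∀ n i, i ∈ s n ↔ emb i < n := by
    intro n i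
    simp [hs, Finset.mem_preimage]
  set P : ℕ → X → ℂ := fun n x => ∑ i ∈ s n, term i x with hP
  have hPmeas : ∀ n, Measurable (P n) := fun n =>
    Finset.measurable_sum _ fun i _ => hmeas_term i
  refine measurable_of_tendsto_metrizable' atTop hPmeas (tendsto_pi_nhds.mpr fun x => ?_)
  by_cases hex : ∃ i, col i = k ∧ x ∈ U i
  · obtain ⟨i₀, hik, hx⟩ := hex
    refine tendsto_atTop_of_eventually_const (i₀ := emb i₀ + 1) fun n hn => ?_
    have : Fc U w col k lam x = ∑ i ∈ s n, term i x := by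
      refine tsum_eq_sum fun j hj => ?_
      have hjn : ¬ emb j < n := fun h => hj ((hmem n j).mpr h)
      have hji : j ≠ i₀ := by
        intro h; subst h; omega
      by_cases hjk : col j = k
      · have hxj : x ∉ U j := fun hxj => hji (hdisj j i₀ (hjk.trans hik.symm) ⟨x, hxj, hx⟩)
        simp [hterm, hjk, Set.indicator_of_notMem hxj]
      · simp [hterm, hjk]
    rw [hP]
    exact this.symm
  · push_neg at hex
    have hzero : ∀ i, term i x = 0 := by
      intro i
      by_cases hjk : col i = k
      · simp [hterm, hjk, Set.indicator_of_notMem (hex i hjk)]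
      · simp [hterm, hjk]
    have h1 : Fc U w col k lam x = 0 := Fc_eq_zero w lam hex
    have h2 : ∀ n, P n x = 0 := fun n => Finset.sum_eq_zero fun i _ => hzero i
    rw [h1]
    refine tendsto_atTop_of_eventually_const (i₀ := 0) fun n _ => h2 n

/-- Pointwise decomposition into color slices. -/
theorem slice_decomp (hcol_lt : ∀ i, col i < σ') (lam : I → ℂ) (x : X) :
    ∑' i, (U i).indicator (fun _ => w i * (‖lam i‖₊ : ℝ≥0∞)) x
      = ∑ k ∈ Finset.range σ', hsl U w col k lam x := by
  classical
  unfold hsl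
  rw [← Summable.tsum_finsetSum (fun k _ => ENNReal.summable)]
  congr 1
  funext i
  rw [Finset.sum_ite_eq (Finset.range σ') (col i)]
  simp [Finset.mem_range.mpr (hcol_lt i)]

end Slices

theorem QBF.N_indicator_const (Q : QBF X μ) {S : Set X} (hS : MeasurableSet S)
    (a : ℝ≥0∞) : Q.N (fun x => S.indicator (fun _ => a) x) = a * Q.N (chi S) := by
  rw [← Q.smul_eq a _ (chi_measurable hS)]
  congr 1
  funext x
  by_cases hx : x ∈ S <;> simp [chi, hx]

theorem tendsto_ennnorm_zero {z : ℕ → ℂ} (h : Tendsto z atTop (𝓝 0)) :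
    Tendsto (fun n => ((‖z n‖₊ : ℝ≥0) : ℝ≥0∞)) atTop (𝓝 0) := by
  rw [← ENNReal.coe_zero, ENNReal.tendsto_coe, ← NNReal.tendsto_coe]
  simpa [coe_nnnorm] using h.norm

/-- Master theorem: all six properties for the generalized weighted sequence space. -/
theorem gN_master [BorelSpace X] [T2Space X] [LocallyCompactSpace X] [SigmaCompactSpace X]
    [IsFiniteMeasureOnCompacts μ]
    (hsupp : ∀ V : Set X, IsOpen V → V.Nonempty → 0 < μ V)
    (Q : QBF X μ)
    (hrich : ∀ K : Set X, IsCompact K → Q.N (K.indicator fun _ => 1) ≠ ⊤)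
    {I : Type*} (U : I → Set X) (σ : ℕ) (hU : AdmissibleCovering U σ)
    (w : I → ℝ≥0∞) (hw0 : ∀ i, w i ≠ 0) (hwt : ∀ i, w i ≠ ⊤) :
    (∀ lam kap : I → ℂ,
        gN Q U w (lam + kap) ≤ Q.C * (gN Q U w lam + gN Q U w kap)) ∧
    (∀ (c : ℂ) (lam : I → ℂ), gN Q U w (c • lam) = (‖c‖₊ : ℝ≥0∞) * gN Q U w lam) ∧
    (∀ lam : I → ℂ, gN Q U w lam = 0 → lam = 0) ∧
    (∀ lam kap : I → ℂ, (∀ i, ‖lam i‖ ≤ ‖kap i‖) → gN Q U w lam ≤ gN Q U w kap) ∧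
    (∀ lam : I → ℂ, (Function.support lam).Finite → gN Q U w lam ≠ ⊤) ∧
    (∀ Λ : ℕ → I → ℂ, (∀ n, gN Q U w (Λ n) ≠ ⊤) →
        Tendsto (fun q : ℕ × ℕ => gN Q U w (Λ q.1 - Λ q.2)) atTop (nhds 0) →
        ∃ Λ' : I → ℂ, gN Q U w Λ' ≠ ⊤ ∧
          Tendsto (fun n => gN Q U w (Λ n - Λ')) atTop (nhds 0)) := by
  have hc : Countable I := hU.countable_index
  set f : (I → ℂ) → X → ℝ≥0∞ :=
    fun lam x => ∑' i, (U i).indicator (fun _ => w i * (‖lam i‖₊ : ℝ≥0∞)) x with hf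
  have hfmeas : ∀ lam, Measurable (f lam) := fun lam => meas_tsum_ind hU.meas _
  have hgN : ∀ lam, gN Q U w lam = Q.N (f lam) := fun _ => rfl
  -- solidity (used twice)
  have hsolid : ∀ lam kap : I → ℂ, (∀ i, ‖lam i‖ ≤ ‖kap i‖) →
      gN Q U w lam ≤ gN Q U w kap := by
    intro lam kap h
    rw [hgN, hgN]
    refine Q.mono _ _ (hfmeas lam) (hfmeas kap) (ae_of_all _ fun x => ?_)
    refine ENNReal.tsum_le_tsum fun i => ?_
    by_cases hx : x ∈ U i
    · rw [Set.indicator_of_mem hx, Set.indicator_of_mem hx]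
      have : (‖lam i‖₊ : ℝ≥0) ≤ ‖kap i‖₊ := h i
      exact mul_le_mul_right (ENNReal.coe_le_coe.mpr this) _
    · rw [Set.indicator_of_notMem hx, Set.indicator_of_notMem hx]
  refine ⟨?_, ?_, ?_, hsolid, ?_, ?_⟩
  -- quasi-triangle
  · intro lam kap
    rw [hgN, hgN, hgN]
    have h1 : Q.N (f (lam + kap)) ≤ Q.N (fun x => f lam x + f kap x) := by
      refine Q.mono _ _ (hfmeas _) ((hfmeas lam).add (hfmeas kap)) (ae_of_all _ fun x => ?_)
      simp only [hf]
      rw [← ENNReal.tsum_add]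
      refine ENNReal.tsum_le_tsum fun i => ?_
      by_cases hx : x ∈ U i
      · simp only [Set.indicator_of_mem hx]
        rw [← mul_add]
        refine mul_le_mul_right ?_ _
        rw [← ENNReal.coe_add]
        exact ENNReal.coe_le_coe.mpr (nnnorm_add_le _ _)
      · simp [Set.indicator_of_notMem hx]
    exact h1.trans (Q.add_le _ _ (hfmeas lam) (hfmeas kap))
  -- homogeneity
  · intro c lam
    rw [hgN, hgN]
    have heq : f (c • lam) = fun x => (‖c‖₊ : ℝ≥0∞) * f lam x := by
      funext x
      simp only [hf]
      rw [← ENNReal.tsum_mul_left]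
      congr 1
      funext i
      by_cases hx : x ∈ U i
      · simp only [Set.indicator_of_mem hx, Pi.smul_apply, smul_eq_mul, nnnorm_mul]
        push_cast
        ring
      · simp [Set.indicator_of_notMem hx]
    rw [heq, Q.smul_eq _ _ (hfmeas lam)]
  -- definiteness
  · intro lam h
    funext i
    by_contra hne
    have hle := coord_le Q hU w lam i
    rw [h] at hle
    have h0 : (w i * (‖lam i‖₊ : ℝ≥0∞)) * Q.N (chi (U i)) = 0 := le_antisymm hle (zero_le)
    rcases mul_eq_zero.mp h0 with h1 | h1
    · rcases mul_eq_zero.mp h1 with h2 | h2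
      · exact hw0 i h2
      · exact hne (by simpa using h2)
    · exact N_chiU_pos Q hsupp hU i h1
  -- finitely supported sequences
  · intro lam hfin
    classical
    set s : Finset I := hfin.toFinset with hs
    have hsum : f lam = fun x => ∑ i ∈ s, (U i).indicator (fun _ => w i * (‖lam i‖₊ : ℝ≥0∞)) x := by
      funext x
      refine tsum_eq_sum fun j hj => ?_
      have : lam j = 0 := by
        by_contra h
        exact hj (hfin.mem_toFinset.mpr h)
      simp [this]
    set K : Set X := ⋃ i ∈ s, closure (U i) with hK
    have hKcomp : IsCompact K := s.finite_toSet.isCompact_biUnion fun i _ => hU.rel_compact i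
    have hKclosed : IsClosed K := s.finite_toSet.isClosed_biUnion fun i _ => isClosed_closure
    set M : ℝ≥0∞ := ∑ i ∈ s, w i * (‖lam i‖₊ : ℝ≥0∞) with hM
    have hMne : M ≠ ⊤ := by
      rw [hM, ← lt_top_iff_ne_top, ENNReal.sum_lt_top]
      intro i _
      exact (ENNReal.mul_ne_top (hwt i) ENNReal.coe_ne_top).lt_top
    have hbound : Q.N (f lam) ≤ M * Q.N (chi K) := by
      rw [← Q.N_indicator_const hKclosed.measurableSet M]
      refine Q.mono _ _ (by rw [hsum]; exact Finset.measurable_sum s fun i _ =>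
        measurable_const.indicator (hU.meas i))
        (measurable_const.indicator hKclosed.measurableSet) (ae_of_all _ fun x => ?_)
      rw [hsum]
      by_cases hx : x ∈ K
      · rw [Set.indicator_of_mem hx]
        refine le_trans (Finset.sum_le_sum fun i _ => Set.indicator_le_self _ _ x) le_rfl
      · have : ∀ i ∈ s, x ∉ U i := by
          intro i hi hxU
          exact hx (Set.mem_biUnion hi (subset_closure hxU))
        rw [Set.indicator_of_notMem hx]
        refine le_of_eq (Finset.sum_eq_zero fun i hi => ?_)
        rw [Set.indicator_of_notMem (this i hi)]
    rw [hgN]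
    exact ne_top_of_le_ne_top (ENNReal.mul_ne_top hMne (hrich K hKcomp)) hbound
  -- completeness
  · intro Λ hfin hcauchy
    rcases isEmpty_or_nonempty I with hI | hI
    · -- trivial case: empty index set
      have hz : ∀ lam : I → ℂ, gN Q U w lam = 0 := by
        intro lam
        rw [hgN]
        have : f lam = fun _ => 0 := by
          funext x; simp only [hf]; exact tsum_empty
        rw [this, Q.N_zero]
      refine ⟨0, by simp [hz], ?_⟩
      have : (fun n => gN Q U w (Λ n - 0)) = fun _ => 0 := funext fun n => hz _
      rw [this]
      exact tendsto_const_nhds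
    · classical
      obtain ⟨emb, hemb⟩ := exists_injective_nat I
      set nb : I → Finset I := fun i => (hU.inter_finite i).toFinset with hnb
      have hnbmem : ∀ i j, j ∈ nb i ↔ (U i ∩ U j).Nonempty := fun i j =>
        (hU.inter_finite i).mem_toFinset
      set col := greedyCol emb nb with hcol
      have hdisj : ∀ i j, col i = col j → (U i ∩ U j).Nonempty → i = j := by
        intro i j hcc hne
        by_contra hij
        exact greedyCol_ne emb hemb nb hij ((hnbmem i j).mpr hne)
          ((hnbmem j i).mpr (by rwa [Set.inter_comm] at hne)) hcc
      have hUne : ∀ i, (U i).Nonempty := fun i =>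
        (hU.interior_nonempty i).imp fun _ hx => interior_subset hx
      have hcol_lt : ∀ i, col i < σ := fun i => greedyCol_lt emb nb i
        ((hnbmem i i).mpr (by rw [Set.inter_self]; exact hUne i))
        (by rw [← Set.ncard_eq_toFinset_card _ (hU.inter_finite i)]; exact hU.inter_card_le i)
      -- slice machinery
      have hFcmeas : ∀ (k : ℕ) (lam : I → ℂ), Measurable (Fc U w col k lam) :=
        fun k lam => Fc_measurable w hdisj hU.meas lam
      have hslmeas : ∀ (k : ℕ) (lam : I → ℂ), Measurable (hsl U w col k lam) :=
        fun k lam => hsl_measurable w hU.meas lam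
      have hnorm_eq : ∀ (k : ℕ) (lam : I → ℂ),
          (fun x => ((‖Fc U w col k lam x‖₊ : ℝ≥0) : ℝ≥0∞)) = hsl U w col k lam :=
        fun k lam => funext (Fc_nnnorm w hdisj hwt lam)
      have hlower : ∀ (k : ℕ) (lam : I → ℂ), Q.N (hsl U w col k lam) ≤ gN Q U w lam := by
        intro k lam
        rw [hgN]
        exact Q.mono _ _ (hslmeas k lam) (hfmeas lam) (ae_of_all _ (hsl_le w lam))
      have hupper : ∀ lam : I → ℂ,
          gN Q U w lam ≤ Q.C ^ σ * ∑ k ∈ Finset.range σ, Q.N (hsl U w col k lam) := by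
        intro lam
        rw [hgN]
        have hdecomp : f lam = fun x => ∑ k ∈ Finset.range σ, hsl U w col k lam x :=
          funext fun x => slice_decomp w hcol_lt lam x
        rw [hdecomp]
        have := Q.N_sum_le (Finset.range σ) (fun k => hsl U w col k lam)
          (fun k => hslmeas k lam)
        simpa using this
      -- coordinatewise limits
      have hchi_netop : ∀ i, Q.N (chi (U i)) ≠ ⊤ := N_chiU_ne_top Q hrich hU
      have hchi_pos : ∀ i, Q.N (chi (U i)) ≠ 0 := N_chiU_pos Q hsupp hU
      have hcoef0 : ∀ i, w i * Q.N (chi (U i)) ≠ 0 := fun i =>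
        mul_ne_zero (hw0 i) (hchi_pos i)
      have hcoeft : ∀ i, w i * Q.N (chi (U i)) ≠ ⊤ := fun i =>
        ENNReal.mul_ne_top (hwt i) (hchi_netop i)
      have hcoord_bound : ∀ (lam : I → ℂ) (i : I),
          ((‖lam i‖₊ : ℝ≥0) : ℝ≥0∞) ≤ gN Q U w lam / (w i * Q.N (chi (U i))) := by
        intro lam i
        rw [ENNReal.le_div_iff_mul_le (Or.inl (hcoef0 i)) (Or.inl (hcoeft i))]
        calc ((‖lam i‖₊ : ℝ≥0) : ℝ≥0∞) * (w i * Q.N (chi (U i)))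
            = (w i * (‖lam i‖₊ : ℝ≥0∞)) * Q.N (chi (U i)) := by ring
          _ ≤ gN Q U w lam := coord_le Q hU w lam i
      have hcauchy_coord : ∀ i, CauchySeq (fun n => Λ n i) := by
        intro i
        rw [cauchySeq_iff_tendsto_dist_atTop_0]
        have h1 : Tendsto (fun q : ℕ × ℕ =>
            gN Q U w (Λ q.1 - Λ q.2) / (w i * Q.N (chi (U i)))) atTop (𝓝 0) := by
          have := ENNReal.Tendsto.mul_const (b := (w i * Q.N (chi (U i)))⁻¹) hcauchy
            (Or.inr (ENNReal.inv_ne_top.mpr (hcoef0 i)))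
          simpa [div_eq_mul_inv] using this
        have h2 : Tendsto (fun q : ℕ × ℕ => ((‖Λ q.1 i - Λ q.2 i‖₊ : ℝ≥0) : ℝ≥0∞))
            atTop (𝓝 0) := by
          refine tendsto_of_tendsto_of_tendsto_of_le_of_le tendsto_const_nhds h1
            (fun q => zero_le) (fun q => ?_)
          simpa using hcoord_bound (Λ q.1 - Λ q.2) i
        rw [← ENNReal.coe_zero, ENNReal.tendsto_coe, ← NNReal.tendsto_coe] at h2
        simpa [dist_eq_norm, coe_nnnorm] using h2
      choose Λ' hΛ' using fun i => cauchySeq_tendsto_of_complete (hcauchy_coord i)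
      -- per-color limits from completeness of Y
      have hQcomp : ∀ k : ℕ, ∃ G : X → ℂ, Measurable G ∧
          Q.N (fun x => ((‖G x‖₊ : ℝ≥0) : ℝ≥0∞)) ≠ ⊤ ∧
          Tendsto (fun n => Q.N (fun x =>
            ((‖Fc U w col k (Λ n) x - G x‖₊ : ℝ≥0) : ℝ≥0∞))) atTop (𝓝 0) := by
        intro k
        refine Q.complete (fun n => Fc U w col k (Λ n)) (fun n => hFcmeas k (Λ n))
          (fun n => ?_) ?_
        · rw [hnorm_eq]
          exact ne_top_of_le_ne_top (hfin n) (hlower k (Λ n))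
        · have hb : ∀ q : ℕ × ℕ, Q.N (fun x =>
              ((‖Fc U w col k (Λ q.1) x - Fc U w col k (Λ q.2) x‖₊ : ℝ≥0) : ℝ≥0∞))
              ≤ gN Q U w (Λ q.1 - Λ q.2) := by
            intro q
            have heq : (fun x =>
                ((‖Fc U w col k (Λ q.1) x - Fc U w col k (Λ q.2) x‖₊ : ℝ≥0) : ℝ≥0∞))
                = hsl U w col k (Λ q.1 - Λ q.2) := by
              funext x
              rw [← Fc_sub w hdisj hwt (Λ q.1) (Λ q.2) x]
              exact Fc_nnnorm w hdisj hwt _ x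
            rw [heq]
            exact hlower k _
          exact tendsto_of_tendsto_of_tendsto_of_le_of_le tendsto_const_nhds hcauchy
            (fun q => zero_le) hb
      choose G hGm hGf hGt using hQcomp
      -- identification: `Fc k Λ' =ᵐ[μ] G k`
      have hae : ∀ k : ℕ, (Fc U w col k Λ') =ᵐ[μ] G k := by
        intro k
        set W : Set X := ⋃ i ∈ {i : I | col i = k}, U i with hW
        have hWmeas : MeasurableSet W :=
          MeasurableSet.biUnion (Set.to_countable _) fun i _ => hU.meas i
        have claim1 : ∀ i : I, ∀ᵐ x ∂μ, col i = k → x ∈ U i →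
            G k x = Fc U w col k Λ' x := by
          intro i
          by_cases hik : col i = k
          swap
          · exact ae_of_all _ fun x h => absurd h hik
          · set c : ℂ := (((w i).toReal : ℝ) : ℂ) * Λ' i with hcdef
            set E : X → ℝ≥0∞ :=
              (U i).indicator (fun x => ((‖c - G k x‖₊ : ℝ≥0) : ℝ≥0∞)) with hE
            have hEmeas : Measurable E :=
              ((measurable_const.sub (hGm k)).enorm).indicator (hU.meas i)
            have hbound : ∀ n, Q.N E ≤ Q.C *
                (((‖c - (((w i).toReal : ℝ) : ℂ) * Λ n i‖₊ : ℝ≥0) : ℝ≥0∞) *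
                  Q.N (chi (U i)) +
                 Q.N (fun x => ((‖Fc U w col k (Λ n) x - G k x‖₊ : ℝ≥0) : ℝ≥0∞))) := by
              intro n
              set cn : ℂ := (((w i).toReal : ℝ) : ℂ) * Λ n i with hcn
              have hpt : ∀ x, E x ≤
                  (U i).indicator (fun _ => ((‖c - cn‖₊ : ℝ≥0) : ℝ≥0∞)) x +
                  ((‖Fc U w col k (Λ n) x - G k x‖₊ : ℝ≥0) : ℝ≥0∞) := by
                intro x
                by_cases hx : x ∈ U i
                · rw [hE, Set.indicator_of_mem hx, Set.indicator_of_mem hx]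
                  have h1 : Fc U w col k (Λ n) x = cn := Fc_eq_of_mem w hdisj _ hik hx
                  rw [h1]
                  have : c - G k x = (c - cn) + (cn - G k x) := by ring
                  rw [this, ← ENNReal.coe_add]
                  exact ENNReal.coe_le_coe.mpr (nnnorm_add_le _ _)
                · rw [hE, Set.indicator_of_notMem hx]
                  exact zero_le
              calc Q.N E ≤ Q.N (fun x =>
                    (U i).indicator (fun _ => ((‖c - cn‖₊ : ℝ≥0) : ℝ≥0∞)) x +
                    ((‖Fc U w col k (Λ n) x - G k x‖₊ : ℝ≥0) : ℝ≥0∞)) := by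
                    refine Q.mono _ _ hEmeas ?_ (ae_of_all _ hpt)
                    exact (measurable_const.indicator (hU.meas i)).add
                      (((hFcmeas k (Λ n)).sub (hGm k)).enorm)
                _ ≤ Q.C * (Q.N (fun x =>
                      (U i).indicator (fun _ => ((‖c - cn‖₊ : ℝ≥0) : ℝ≥0∞)) x) +
                    Q.N (fun x => ((‖Fc U w col k (Λ n) x - G k x‖₊ : ℝ≥0) : ℝ≥0∞))) :=
                    Q.add_le _ _ (measurable_const.indicator (hU.meas i))
                      (((hFcmeas k (Λ n)).sub (hGm k)).enorm)
                _ = Q.C * (((‖c - cn‖₊ : ℝ≥0) : ℝ≥0∞) * Q.N (chi (U i)) +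
                    Q.N (fun x => ((‖Fc U w col k (Λ n) x - G k x‖₊ : ℝ≥0) : ℝ≥0∞))) := by
                    rw [Q.N_indicator_const (hU.meas i)]
            have htendc : Tendsto (fun n =>
                ((‖c - (((w i).toReal : ℝ) : ℂ) * Λ n i‖₊ : ℝ≥0) : ℝ≥0∞))
                atTop (𝓝 0) := by
              apply tendsto_ennnorm_zero
              have : Tendsto (fun n => (((w i).toReal : ℝ) : ℂ) * Λ n i) atTop (𝓝 c) := by
                rw [hcdef]
                exact (hΛ' i).const_mul _
              have h4 := Tendsto.sub
                (tendsto_const_nhds : Tendsto (fun _ : ℕ => c) atTop (𝓝 c)) this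
              simpa using h4
            have htend : Tendsto (fun n => Q.C *
                (((‖c - (((w i).toReal : ℝ) : ℂ) * Λ n i‖₊ : ℝ≥0) : ℝ≥0∞) *
                  Q.N (chi (U i)) +
                 Q.N (fun x => ((‖Fc U w col k (Λ n) x - G k x‖₊ : ℝ≥0) : ℝ≥0∞))))
                atTop (𝓝 0) := by
              have h1 := ENNReal.Tendsto.mul_const (b := Q.N (chi (U i))) htendc
                (Or.inr (hchi_netop i))
              rw [zero_mul] at h1
              have h2 := h1.add (hGt k)
              rw [add_zero] at h2
              have h3 := ENNReal.Tendsto.const_mul (a := Q.C) h2 (Or.inr Q.C_ne_top)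
              rwa [mul_zero] at h3
            have hE0 : Q.N E = 0 :=
              le_antisymm (ge_of_tendsto' htend hbound) (zero_le)
            have haeE := Q.eq_zero E hEmeas hE0
            filter_upwards [haeE] with x hx hik' hxU
            rw [hE, Set.indicator_of_mem hxU] at hx
            simp only [Pi.zero_apply] at hx
            have hsub : c - G k x = 0 := by
              have : (‖c - G k x‖₊ : ℝ≥0) = 0 := by exact_mod_cast hx
              simpa using this
            rw [Fc_eq_of_mem w hdisj Λ' hik' hxU, ← hcdef]
            linear_combination -hsub
        have claim2 : ∀ᵐ x ∂μ, x ∉ W → G k x = 0 := by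
          set E' : X → ℝ≥0∞ := Wᶜ.indicator (fun x => ((‖G k x‖₊ : ℝ≥0) : ℝ≥0∞)) with hE'
          have hE'meas : Measurable E' := ((hGm k).enorm).indicator hWmeas.compl
          have hb : ∀ n, Q.N E' ≤
              Q.N (fun x => ((‖Fc U w col k (Λ n) x - G k x‖₊ : ℝ≥0) : ℝ≥0∞)) := by
            intro n
            refine Q.mono _ _ hE'meas (((hFcmeas k (Λ n)).sub (hGm k)).enorm)
              (ae_of_all _ fun x => ?_)
            by_cases hx : x ∈ Wᶜ
            · rw [hE', Set.indicator_of_mem hx]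
              have hz : Fc U w col k (Λ n) x = 0 := by
                refine Fc_eq_zero w _ fun i hik hxU => ?_
                exact hx (Set.mem_biUnion (s := {i : I | col i = k}) hik hxU)
              rw [hz]
              simp
            · rw [hE', Set.indicator_of_notMem hx]
              exact zero_le
          have hE'0 : Q.N E' = 0 :=
            le_antisymm (ge_of_tendsto' (hGt k) hb) (zero_le)
          filter_upwards [Q.eq_zero E' hE'meas hE'0] with x hx hxW
          rw [hE', Set.indicator_of_mem (Set.mem_compl hxW)] at hx
          simp only [Pi.zero_apply] at hx
          have : (‖G k x‖₊ : ℝ≥0) = 0 := by exact_mod_cast hx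
          simpa using this
        have hall : ∀ᵐ x ∂μ, ∀ i : I, col i = k → x ∈ U i →
            G k x = Fc U w col k Λ' x := ae_all_iff.mpr claim1
        filter_upwards [hall, claim2] with x h1 h2
        by_cases hxW : x ∈ W
        · rw [hW, Set.mem_iUnion₂] at hxW
          obtain ⟨i, hik, hxU⟩ := hxW
          exact (h1 i hik hxU).symm
        · rw [Fc_eq_zero w Λ' (fun i hik hxU =>
            hxW (Set.mem_biUnion (s := {i : I | col i = k}) hik hxU))]
          exact (h2 hxW).symm
      -- assembly
      refine ⟨Λ', ?_, ?_⟩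
      · refine ne_top_of_le_ne_top ?_ (hupper Λ')
        refine ENNReal.mul_ne_top (ENNReal.pow_ne_top Q.C_ne_top) ?_
        rw [← lt_top_iff_ne_top, ENNReal.sum_lt_top]
        intro k _
        have : Q.N (hsl U w col k Λ') = Q.N (fun x => ((‖G k x‖₊ : ℝ≥0) : ℝ≥0∞)) := by
          rw [← hnorm_eq]
          refine Q.N_congr_ae ((hFcmeas k Λ').enorm) ((hGm k).enorm) ?_
          filter_upwards [hae k] with x hx
          rw [hx]
        rw [this, lt_top_iff_ne_top]
        exact hGf k
      · have hb : ∀ n, gN Q U w (Λ n - Λ') ≤ Q.C ^ σ * ∑ k ∈ Finset.range σ,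
            Q.N (fun x => ((‖Fc U w col k (Λ n) x - G k x‖₊ : ℝ≥0) : ℝ≥0∞)) := by
          intro n
          refine le_trans (hupper _) ?_
          refine mul_le_mul_right (Finset.sum_le_sum fun k _ => ?_) _
          have he : hsl U w col k (Λ n - Λ') =ᵐ[μ]
              (fun x => ((‖Fc U w col k (Λ n) x - G k x‖₊ : ℝ≥0) : ℝ≥0∞)) := by
            filter_upwards [hae k] with x hx
            rw [← Fc_nnnorm w hdisj hwt (Λ n - Λ') x, Fc_sub w hdisj hwt (Λ n) Λ' x, hx]
          exact le_of_eq (Q.N_congr_ae (hslmeas _ _)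
            (((hFcmeas k (Λ n)).sub (hGm k)).enorm) he)
        have htend : Tendsto (fun n => Q.C ^ σ * ∑ k ∈ Finset.range σ,
            Q.N (fun x => ((‖Fc U w col k (Λ n) x - G k x‖₊ : ℝ≥0) : ℝ≥0∞)))
            atTop (𝓝 0) := by
          have hsum := tendsto_finset_sum (Finset.range σ) fun k _ => hGt k
          have h3 := ENNReal.Tendsto.const_mul (a := Q.C ^ σ) hsum
            (Or.inr (ENNReal.pow_ne_top Q.C_ne_top))
          simpa using h3
        exact tendsto_of_tendsto_of_tendsto_of_le_of_le tendsto_const_nhds htend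
          (fun n => zero_le) hb

/-- For a rich solid QBF-space `Y` on `X` and an admissible covering `U`,
the sequence spaces `Y♭(U)` and `Y♮(U)` are rich solid quasi-Banach sequence spaces with the
same quasi-norm constant `C_Y` as `Y`: the quasi-triangle inequality holds with constant
`C_Y`, the quasi-norms are homogeneous and definite, the spaces are solid, contain all
finitely supported sequences, and are complete. -/
theorem sequence_spaces_rich_solid_complete
    [BorelSpace X] [T2Space X] [LocallyCompactSpace X] [SigmaCompactSpace X]
    [IsFiniteMeasureOnCompacts μ]
    (hsupp : ∀ V : Set X, IsOpen V → V.Nonempty → 0 < μ V)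
    (Q : QBF X μ)
    (hrich : ∀ K : Set X, IsCompact K → Q.N (K.indicator fun _ => 1) ≠ ⊤)
    {I : Type*} (U : I → Set X) (σ : ℕ) (hU : AdmissibleCovering U σ) :
    -- `Y♭(U)`:
    ((∀ lam kap : I → ℂ,
        flatN Q U (lam + kap) ≤ Q.C * (flatN Q U lam + flatN Q U kap)) ∧
     (∀ (c : ℂ) (lam : I → ℂ), flatN Q U (c • lam) = (‖c‖₊ : ℝ≥0∞) * flatN Q U lam) ∧
     (∀ lam : I → ℂ, flatN Q U lam = 0 → lam = 0) ∧
     (∀ lam kap : I → ℂ, (∀ i, ‖lam i‖ ≤ ‖kap i‖) → flatN Q U lam ≤ flatN Q U kap) ∧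
     (∀ lam : I → ℂ, (Function.support lam).Finite → flatN Q U lam ≠ ⊤) ∧
     (∀ Λ : ℕ → I → ℂ, (∀ n, flatN Q U (Λ n) ≠ ⊤) →
        Tendsto (fun q : ℕ × ℕ => flatN Q U (Λ q.1 - Λ q.2)) atTop (nhds 0) →
        ∃ Λ' : I → ℂ, flatN Q U Λ' ≠ ⊤ ∧
          Tendsto (fun n => flatN Q U (Λ n - Λ')) atTop (nhds 0))) ∧
    -- `Y♮(U)`:
    ((∀ lam kap : I → ℂ,
        natN Q U (lam + kap) ≤ Q.C * (natN Q U lam + natN Q U kap)) ∧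
     (∀ (c : ℂ) (lam : I → ℂ), natN Q U (c • lam) = (‖c‖₊ : ℝ≥0∞) * natN Q U lam) ∧
     (∀ lam : I → ℂ, natN Q U lam = 0 → lam = 0) ∧
     (∀ lam kap : I → ℂ, (∀ i, ‖lam i‖ ≤ ‖kap i‖) → natN Q U lam ≤ natN Q U kap) ∧
     (∀ lam : I → ℂ, (Function.support lam).Finite → natN Q U lam ≠ ⊤) ∧
     (∀ Λ : ℕ → I → ℂ, (∀ n, natN Q U (Λ n) ≠ ⊤) →
        Tendsto (fun q : ℕ × ℕ => natN Q U (Λ q.1 - Λ q.2)) atTop (nhds 0) →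
        ∃ Λ' : I → ℂ, natN Q U Λ' ≠ ⊤ ∧
          Tendsto (fun n => natN Q U (Λ n - Λ')) atTop (nhds 0))) := by
  constructor
  · have h := gN_master hsupp Q hrich U σ hU (fun _ => 1)
      (fun _ => one_ne_zero) (fun _ => ENNReal.one_ne_top)
    simp only [flatN_eq_gN]
    exact h
  · have h := gN_master hsupp Q hrich U σ hU (fun i => (μ (U i))⁻¹)
      (fun i => ENNReal.inv_ne_zero.mpr (hU.measure_ne_top i))
      (fun i => ENNReal.inv_ne_top.mpr (hU.measure_pos hsupp i).ne')
    simp only [natN_eq_gN]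
    exact h
end Aux
end
end

section
/- Let U = {U_i}_{i∈I} be an admissible covering of X with intersection number σ(U), let ν : X → (0,∞) be measurable and 0 < p < ∞. Then there exist constants 0 < c ≤ C < ∞, depending only on p and σ(U), such that for every sequence (λ_i)_{i∈I} of complex numbers, c · Σ_{i∈I} |λ_i|^p ∫_{U_i} ν(y)^p dμ(y) ≤ ∫_X ( Σ_{i∈I} |λ_i| χ_{U_i}(y) ν(y) )^p dμ(y) ≤ C · Σ_{i∈I} |λ_i|^p ∫_{U_i} ν(y)^p dμ(y), where all quantities may equal +∞ and the inner sum is locally finite, hence defined pointwise. -/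
open MeasureTheory Filter Topology
open scoped ENNReal NNReal

noncomputable section

/-- For `Y = L_p^ν(X)` and an admissible covering `U` of `X`, the sequence
space norm of `Y♭(U)` is equivalent to a weighted `ℓ_p` norm: there are constants
`0 < c ≤ C < ∞` (depending only on `p` and `σ(U)`) with
`c Σᵢ |λᵢ|^p ∫_{Uᵢ} ν^p ≤ ∫_X (Σᵢ |λᵢ| χ_{Uᵢ} ν)^p ≤ C Σᵢ |λᵢ|^p ∫_{Uᵢ} ν^p`. -/
theorem weighted_Lp_sequence_space_equiv
    {X : Type*} [TopologicalSpace X] [MeasurableSpace X] [BorelSpace X]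
    [T2Space X] [LocallyCompactSpace X] [SigmaCompactSpace X]
    (μ : Measure X) [IsFiniteMeasureOnCompacts μ]
    (hsupp : ∀ V : Set X, IsOpen V → V.Nonempty → 0 < μ V)
    {I : Type*} (U : I → Set X) (σ : ℕ) (hU : AdmissibleCovering U σ)
    (ν : X → ℝ≥0∞) (hνmeas : Measurable ν) (hνpos : ∀ x, 0 < ν x) (hνfin : ∀ x, ν x < ⊤)
    (p : ℝ) (hp : 0 < p) :
    ∃ c C : ℝ≥0∞, 0 < c ∧ C ≠ ⊤ ∧ ∀ lam : I → ℂ,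
      c * ∑' i, (‖lam i‖₊ : ℝ≥0∞) ^ p * ∫⁻ y in U i, ν y ^ p ∂μ ≤
        (∫⁻ y, (∑' i, (U i).indicator (fun _ => (‖lam i‖₊ : ℝ≥0∞)) y) ^ p * ν y ^ p ∂μ) ∧
      (∫⁻ y, (∑' i, (U i).indicator (fun _ => (‖lam i‖₊ : ℝ≥0∞)) y) ^ p * ν y ^ p ∂μ) ≤
        C * ∑' i, (‖lam i‖₊ : ℝ≥0∞) ^ p * ∫⁻ y in U i, ν y ^ p ∂μ := by
  classical
  set N : ℕ := max σ 1 with hNdef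
  have hN0 : ((N : ℝ≥0∞)) ≠ 0 := by
    simp [hNdef]
  have hNtop : ((N : ℝ≥0∞)) ≠ ⊤ := by simp
  have hνpmeas : Measurable fun y => ν y ^ p :=
    ENNReal.continuous_rpow_const.measurable.comp hνmeas
  refine ⟨(N : ℝ≥0∞)⁻¹, (N : ℝ≥0∞) ^ p, ?_, ?_, ?_⟩
  · exact ENNReal.inv_pos.mpr hNtop
  · exact ENNReal.rpow_ne_top_of_nonneg hp.le hNtop
  intro lam
  set a : I → ℝ≥0∞ := fun i => (‖lam i‖₊ : ℝ≥0∞) with ha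
  have hsfin : ∀ y : X, {i | y ∈ U i}.Finite := fun y => hU.locFin.point_finite y
  -- the tsum equals a finite sum
  have hFs : ∀ (g : I → ℝ≥0∞) (y : X),
      (∑' i, (U i).indicator (fun _ => g i) y) = ∑ i ∈ (hsfin y).toFinset, g i := by
    intro g y
    rw [tsum_eq_sum (s := (hsfin y).toFinset) ?_]
    · refine Finset.sum_congr rfl fun i hi => ?_
      simp only [Set.Finite.mem_toFinset, Set.mem_setOf_eq] at hi
      simp [Set.indicator_of_mem hi]
    · intro i hi
      simp only [Set.Finite.mem_toFinset, Set.mem_setOf_eq] at hi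
      simp [Set.indicator_of_notMem hi]
  -- cardinality bound
  have hcard : ∀ y : X, ((hsfin y).toFinset.card) ≤ N := by
    intro y
    rcases (hsfin y).toFinset.eq_empty_or_nonempty with h | ⟨i0, hi0⟩
    · simp [h]
    · simp only [Set.Finite.mem_toFinset, Set.mem_setOf_eq] at hi0
      have hsub : {i | y ∈ U i} ⊆ {j | (U i0 ∩ U j).Nonempty} :=
        fun j hj => ⟨y, hi0, hj⟩
      calc (hsfin y).toFinset.card = {i | y ∈ U i}.ncard := by
            rw [← Set.ncard_coe_finset]
            congr 1
            simp
        _ ≤ {j | (U i0 ∩ U j).Nonempty}.ncard :=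
            Set.ncard_le_ncard hsub (hU.inter_finite i0)
        _ ≤ σ := hU.inter_card_le i0
        _ ≤ N := le_max_left _ _
  -- pointwise claims
  have claimA : ∀ y : X, (∑' i, (U i).indicator (fun _ => a i ^ p) y) ≤
      (N : ℝ≥0∞) * (∑' i, (U i).indicator (fun _ => a i) y) ^ p := by
    intro y
    rw [hFs (fun i => a i ^ p) y, hFs a y]
    set s := (hsfin y).toFinset
    calc ∑ i ∈ s, a i ^ p ≤ s.card • ((∑ i ∈ s, a i) ^ p) := by
          refine Finset.sum_le_card_nsmul s _ _ fun i hi => ?_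
          exact ENNReal.rpow_le_rpow (Finset.single_le_sum (fun j _ => zero_le) hi) hp.le
      _ = (s.card : ℝ≥0∞) * (∑ i ∈ s, a i) ^ p := by
          simp [nsmul_eq_mul]
      _ ≤ (N : ℝ≥0∞) * (∑ i ∈ s, a i) ^ p := by
          gcongr
          exact_mod_cast hcard y
  have claimB : ∀ y : X, (∑' i, (U i).indicator (fun _ => a i) y) ^ p ≤
      (N : ℝ≥0∞) ^ p * (∑' i, (U i).indicator (fun _ => a i ^ p) y) := by
    intro y
    rw [hFs (fun i => a i ^ p) y, hFs a y]
    set s := (hsfin y).toFinset with hs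
    rcases s.eq_empty_or_nonempty with h | hs'
    · simp [h, ENNReal.zero_rpow_of_pos hp]
    · obtain ⟨j, hj, hjsup⟩ := Finset.exists_mem_eq_sup s hs' a
      calc (∑ i ∈ s, a i) ^ p ≤ ((s.card : ℝ≥0∞) * a j) ^ p := by
            refine ENNReal.rpow_le_rpow ?_ hp.le
            calc ∑ i ∈ s, a i ≤ s.card • a j := by
                  refine Finset.sum_le_card_nsmul s _ _ fun i hi => ?_
                  rw [← hjsup]
                  exact Finset.le_sup hi
              _ = (s.card : ℝ≥0∞) * a j := by simp [nsmul_eq_mul]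
        _ = (s.card : ℝ≥0∞) ^ p * a j ^ p :=
            ENNReal.mul_rpow_of_nonneg _ _ hp.le
        _ ≤ (N : ℝ≥0∞) ^ p * ∑ i ∈ s, a i ^ p := by
            have h1 : ((s.card : ℝ≥0∞)) ≤ (N : ℝ≥0∞) := by exact_mod_cast hcard y
            exact mul_le_mul' (ENNReal.rpow_le_rpow h1 hp.le)
              (Finset.single_le_sum (f := fun i => a i ^ p) (fun i _ => zero_le) hj)
  -- the key integral identity
  have key : ∫⁻ y, (∑' i, (U i).indicator (fun _ => a i ^ p) y) * ν y ^ p ∂μ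
      = ∑' i, a i ^ p * ∫⁻ y in U i, ν y ^ p ∂μ := by
    have hpt : ∀ y : X, (∑' i, (U i).indicator (fun _ => a i ^ p) y) * ν y ^ p
        = ∑' i, (U i).indicator (fun z => a i ^ p * ν z ^ p) y := by
      intro y
      rw [← ENNReal.tsum_mul_right]
      exact tsum_congr fun i => by by_cases h : y ∈ U i <;> simp [h]
    have hIcount : Countable I := by
      rw [← Set.countable_univ_iff]
      exact hU.locFin.countable_univ fun i =>
        (hU.interior_nonempty i).mono interior_subset
    simp_rw [hpt]
    rw [lintegral_tsum (f := fun i => (U i).indicator (fun z => a i ^ p * ν z ^ p)) fun i =>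
      ((measurable_const.mul hνpmeas).indicator (hU.meas i)).aemeasurable]
    exact tsum_congr fun i => by
      rw [lintegral_indicator (hU.meas i), lintegral_const_mul _ hνpmeas]
  constructor
  · -- lower bound
    have h1 : ∑' i, a i ^ p * ∫⁻ y in U i, ν y ^ p ∂μ ≤
        (N : ℝ≥0∞) * ∫⁻ y, (∑' i, (U i).indicator (fun _ => a i) y) ^ p * ν y ^ p ∂μ := by
      rw [← key, ← lintegral_const_mul' _ _ hNtop]
      refine lintegral_mono fun y => ?_
      calc (∑' i, (U i).indicator (fun _ => a i ^ p) y) * ν y ^ p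
          ≤ ((N : ℝ≥0∞) * (∑' i, (U i).indicator (fun _ => a i) y) ^ p) * ν y ^ p :=
            mul_le_mul_left (claimA y) _
        _ = (N : ℝ≥0∞) * ((∑' i, (U i).indicator (fun _ => a i) y) ^ p * ν y ^ p) :=
            mul_assoc _ _ _
    calc (N : ℝ≥0∞)⁻¹ * ∑' i, a i ^ p * ∫⁻ y in U i, ν y ^ p ∂μ
        ≤ (N : ℝ≥0∞)⁻¹ * ((N : ℝ≥0∞) *
            ∫⁻ y, (∑' i, (U i).indicator (fun _ => a i) y) ^ p * ν y ^ p ∂μ) :=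
          mul_le_mul_right h1 _
      _ = ∫⁻ y, (∑' i, (U i).indicator (fun _ => a i) y) ^ p * ν y ^ p ∂μ := by
          rw [← mul_assoc, ENNReal.inv_mul_cancel hN0 hNtop, one_mul]
  · -- upper bound
    calc ∫⁻ y, (∑' i, (U i).indicator (fun _ => a i) y) ^ p * ν y ^ p ∂μ
        ≤ ∫⁻ y, (N : ℝ≥0∞) ^ p *
            ((∑' i, (U i).indicator (fun _ => a i ^ p) y) * ν y ^ p) ∂μ := by
          refine lintegral_mono fun y => ?_
          calc (∑' i, (U i).indicator (fun _ => a i) y) ^ p * ν y ^ p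
              ≤ ((N : ℝ≥0∞) ^ p * (∑' i, (U i).indicator (fun _ => a i ^ p) y)) * ν y ^ p :=
                mul_le_mul_left (claimB y) _
            _ = (N : ℝ≥0∞) ^ p *
                ((∑' i, (U i).indicator (fun _ => a i ^ p) y) * ν y ^ p) :=
                mul_assoc _ _ _
      _ = (N : ℝ≥0∞) ^ p *
          ∫⁻ y, (∑' i, (U i).indicator (fun _ => a i ^ p) y) * ν y ^ p ∂μ :=
          lintegral_const_mul' _ _ (ENNReal.rpow_ne_top_of_nonneg hp.le hNtop)
      _ = (N : ℝ≥0∞) ^ p * ∑' i, a i ^ p * ∫⁻ y in U i, ν y ^ p ∂μ := by rw [key]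
end
end

section
/- Let (ψ_x)_{x∈X} be a family in H such that (x,y) ↦ ⟨φ_y, ψ_x⟩ is measurable, and suppose the Gramian kernel G(x,y) = ⟨φ_y, ψ_x⟩ satisfies ess sup_{x∈X} ∫_X |G(x,y)| m_ν(x,y) dμ(y) ≤ A for some A < ∞. Then for μ-a.e. x ∈ X the vector ψ_x belongs to H¹_ν and satisfies ∫_X |⟨ψ_x, φ_y⟩| ν(y) dμ(y) ≤ A · ν(x). -/
open MeasureTheory Filter Topology
open scoped ENNReal NNReal

noncomputable section

/-- Let `(ψ_x)` be a family in `H` whose Gramian kernel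
`G(x,y) = ⟨φ_y, ψ_x⟩` against a Parseval continuous frame `(φ_x)` is measurable and satisfies
`ess sup_x ∫ |G(x,y)| m_ν(x,y) dμ(y) ≤ A < ∞`.  Then for a.e. `x`, `ψ_x ∈ H¹_ν`, with
`∫ |⟨ψ_x, φ_y⟩| ν(y) dμ(y) ≤ A ν(x)`.
(The paper's inner product `⟨·,·⟩` is linear in the first slot; in Mathlib's convention
`⟨a,b⟩_paper = ⟪b,a⟫_ℂ`.) -/
theorem gramian_kernel_mem_H1
    {X : Type*} [TopologicalSpace X] [MeasurableSpace X] [BorelSpace X]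
    [T2Space X] [LocallyCompactSpace X] [SigmaCompactSpace X]
    (μ : Measure X) [IsFiniteMeasureOnCompacts μ]
    (hsupp : ∀ V : Set X, IsOpen V → V.Nonempty → 0 < μ V)
    {H : Type*} [NormedAddCommGroup H] [InnerProductSpace ℂ H] [CompleteSpace H]
    [TopologicalSpace.SeparableSpace H]
    (φ : X → H)
    (hVmeas : ∀ f : H, Measurable fun x => (inner ℂ (φ x) f : ℂ))
    (hParseval : ∀ f : H,
      ∫⁻ x, (‖(inner ℂ (φ x) f : ℂ)‖₊ : ℝ≥0∞) ^ 2 ∂μ = (‖f‖₊ : ℝ≥0∞) ^ 2)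
    (ν : X → ℝ) (hν1 : ∀ x, 1 ≤ ν x) (hνmeas : Measurable ν)
    (ψ : X → H)
    (hGmeas : Measurable fun q : X × X => (inner ℂ (ψ q.1) (φ q.2) : ℂ))
    (A : ℝ≥0∞) (hA : A ≠ ⊤)
    (hbound : essSup (fun x => ∫⁻ y, (‖(inner ℂ (ψ x) (φ y) : ℂ)‖₊ : ℝ≥0∞) *
        ENNReal.ofReal (max (ν x / ν y) (ν y / ν x)) ∂μ) μ ≤ A) :
    ∀ᵐ x ∂μ,
      (∫⁻ y, (‖(inner ℂ (φ y) (ψ x) : ℂ)‖₊ : ℝ≥0∞) * ENNReal.ofReal (ν y) ∂μ) < ⊤ ∧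
      (∫⁻ y, (‖(inner ℂ (φ y) (ψ x) : ℂ)‖₊ : ℝ≥0∞) * ENNReal.ofReal (ν y) ∂μ)
        ≤ A * ENNReal.ofReal (ν x) := by
  have h := ae_le_essSup (f := fun x => ∫⁻ y, (‖(inner ℂ (ψ x) (φ y) : ℂ)‖₊ : ℝ≥0∞) *
        ENNReal.ofReal (max (ν x / ν y) (ν y / ν x)) ∂μ) (μ := μ)
  filter_upwards [h] with x hx
  have hx' : (∫⁻ y, (‖(inner ℂ (ψ x) (φ y) : ℂ)‖₊ : ℝ≥0∞) *
        ENNReal.ofReal (max (ν x / ν y) (ν y / ν x)) ∂μ) ≤ A := hx.trans hbound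
  have key : (∫⁻ y, (‖(inner ℂ (φ y) (ψ x) : ℂ)‖₊ : ℝ≥0∞) * ENNReal.ofReal (ν y) ∂μ)
      ≤ A * ENNReal.ofReal (ν x) := by
    have step : (∫⁻ y, (‖(inner ℂ (φ y) (ψ x) : ℂ)‖₊ : ℝ≥0∞) * ENNReal.ofReal (ν y) ∂μ)
        ≤ ∫⁻ y, ((‖(inner ℂ (ψ x) (φ y) : ℂ)‖₊ : ℝ≥0∞) *
            ENNReal.ofReal (max (ν x / ν y) (ν y / ν x))) * ENNReal.ofReal (ν x) ∂μ := by
      refine lintegral_mono fun y => ?_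
      have hnorm : (‖(inner ℂ (φ y) (ψ x) : ℂ)‖₊ : ℝ≥0∞) = (‖(inner ℂ (ψ x) (φ y) : ℂ)‖₊ : ℝ≥0∞) := by
        exact congrArg _ (NNReal.coe_injective (norm_inner_symm (φ y) (ψ x)))
      have hνx : 0 < ν x := lt_of_lt_of_le one_pos (hν1 x)
      have hνy : 0 < ν y := lt_of_lt_of_le one_pos (hν1 y)
      have hle : ν y ≤ max (ν x / ν y) (ν y / ν x) * ν x := by
        calc ν y = (ν y / ν x) * ν x := by field_simp
        _ ≤ max (ν x / ν y) (ν y / ν x) * ν x :=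
          mul_le_mul_of_nonneg_right (le_max_right _ _) hνx.le
      rw [hnorm, mul_assoc]
      refine mul_le_mul_right ?_ _
      rw [← ENNReal.ofReal_mul (le_max_of_le_right (by positivity))]
      exact ENNReal.ofReal_le_ofReal hle
    rw [lintegral_mul_const' _ _ (by simp)] at step
    refine step.trans ?_
    exact mul_le_mul_left hx' _
  exact ⟨lt_of_le_of_lt key (ENNReal.mul_lt_top hA.lt_top (by simp)), key⟩
end
end

section
/- Assume condition (F). Then: (a) (H¹_ν, ‖·‖_{H¹_ν}) is a Banach space, i.e. every sequence (f_n) in H¹_ν with ‖f_n − f_m‖_{H¹_ν} → 0 as n,m → ∞ converges in ‖·‖_{H¹_ν} to some f ∈ H¹_ν; (b) ‖h‖_H ≤ C_B ‖h‖_{H¹_ν} for every h ∈ H¹_ν, so the inclusion H¹_ν ↪ H is continuous; (c) H¹_ν is dense in H with respect to the Hilbert space norm. -/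
open MeasureTheory Filter Topology
open scoped ENNReal NNReal

noncomputable section

variable {X : Type*} [TopologicalSpace X] [MeasurableSpace X]
variable {H : Type*} [NormedAddCommGroup H] [InnerProductSpace ℂ H]

/-- The `H¹_ν` norm of `f ∈ H` with respect to the frame `φ` and weight `ν`:
`‖f‖_{H¹_ν} = ∫ |⟨f, φ_x⟩| ν(x) dμ(x)` (as an extended real; `f ∈ H¹_ν` iff it is finite).
Here the paper's `⟨f, φ_x⟩` (linear in the first slot) is Mathlib's `⟪φ x, f⟫_ℂ`. -/
def H1enorm (μ : Measure X) (φ : X → H) (ν : X → ℝ) (f : H) : ℝ≥0∞ :=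
  ∫⁻ x, (‖(inner ℂ (φ x) f : ℂ)‖₊ : ℝ≥0∞) * ENNReal.ofReal (ν x) ∂μ

/-- The frame kernel `R(x,y) = ⟨φ_y, φ_x⟩` (paper convention) is `⟪φ x, φ y⟫_ℂ` in Mathlib. -/
def frameKer (φ : X → H) (x y : X) : ℂ := inner ℂ (φ x) (φ y)

/-- The `A_{m_ν}` norm of a complex kernel `K`. -/
def AmNormC (μ : Measure X) (ν : X → ℝ) (K : X → X → ℂ) : ℝ≥0∞ :=
  max
    (essSup (fun x => ∫⁻ y, (‖K x y‖₊ : ℝ≥0∞) *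
      ENNReal.ofReal (max (ν x / ν y) (ν y / ν x)) ∂μ) μ)
    (essSup (fun y => ∫⁻ x, (‖K x y‖₊ : ℝ≥0∞) *
      ENNReal.ofReal (max (ν x / ν y) (ν y / ν x)) ∂μ) μ)

/-- `ℓ : H → ℂ` is a bounded conjugate-linear functional on `H¹_ν`. -/
def IsBCF (μ : Measure X) (φ : X → H) (ν : X → ℝ) (L : H → ℂ) : Prop :=
  (∀ g h : H, H1enorm μ φ ν g ≠ ⊤ → H1enorm μ φ ν h ≠ ⊤ → L (g + h) = L g + L h) ∧
  (∀ (a : ℂ) (h : H), H1enorm μ φ ν h ≠ ⊤ → L (a • h) = (starRingEnd ℂ) a * L h) ∧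
  (∃ C : ℝ≥0∞, C ≠ ⊤ ∧ ∀ h : H, H1enorm μ φ ν h ≠ ⊤ →
    (‖L h‖₊ : ℝ≥0∞) ≤ C * H1enorm μ φ ν h)

section lems
set_option linter.unusedSectionVars false
variable (μ : Measure X) (φ : X → H) (ν : X → ℝ)

lemma H1meas {φ : X → H} {ν : X → ℝ}
    (hVmeas : ∀ f : H, Measurable fun x => (inner ℂ (φ x) f : ℂ))
    (hνmeas : Measurable ν) (f : H) :
    Measurable fun x => (‖(inner ℂ (φ x) f : ℂ)‖₊ : ℝ≥0∞) * ENNReal.ofReal (ν x) :=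
  ((hVmeas f).nnnorm.coe_nnreal_ennreal).mul (ENNReal.measurable_ofReal.comp hνmeas)

lemma H1zero : H1enorm μ φ ν 0 = 0 := by simp [H1enorm]

lemma H1neg (g : H) : H1enorm μ φ ν (-g) = H1enorm μ φ ν g := by
  simp [H1enorm, inner_neg_right]

lemma H1smul (a : ℂ) (g : H) : H1enorm μ φ ν (a • g) = (‖a‖₊ : ℝ≥0∞) * H1enorm μ φ ν g := by
  unfold H1enorm
  rw [← lintegral_const_mul' _ _ ENNReal.coe_ne_top]
  congr 1; ext x
  rw [inner_smul_right, nnnorm_mul, ENNReal.coe_mul, mul_assoc]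

lemma H1add (hVmeas : ∀ f : H, Measurable fun x => (inner ℂ (φ x) f : ℂ))
    (hνmeas : Measurable ν) (g h : H) :
    H1enorm μ φ ν (g + h) ≤ H1enorm μ φ ν g + H1enorm μ φ ν h := by
  unfold H1enorm
  rw [← lintegral_add_left (H1meas hVmeas hνmeas g)]
  refine lintegral_mono fun x => ?_
  rw [← add_mul, inner_add_right]
  exact mul_le_mul_left (ENNReal.coe_le_coe.2 (nnnorm_add_le _ _)) _

lemma H1sub (hVmeas : ∀ f : H, Measurable fun x => (inner ℂ (φ x) f : ℂ))
    (hνmeas : Measurable ν) (g h : H) :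
    H1enorm μ φ ν (g - h) ≤ H1enorm μ φ ν g + H1enorm μ φ ν h := by
  rw [sub_eq_add_neg, ← H1neg μ φ ν h]
  exact H1add μ φ ν hVmeas hνmeas g (-h)

lemma H1embed (hParseval : ∀ f : H,
      ∫⁻ x, (‖(inner ℂ (φ x) f : ℂ)‖₊ : ℝ≥0∞) ^ 2 ∂μ = (‖f‖₊ : ℝ≥0∞) ^ 2)
    (hν1 : ∀ x, 1 ≤ ν x)
    (CB : ℝ) (hCB : 0 < CB) (hφbd : ∀ x, ‖φ x‖ ≤ CB * ν x) (h : H) :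
    (‖h‖₊ : ℝ≥0∞) ≤ ENNReal.ofReal CB * H1enorm μ φ ν h := by
  set A : ℝ≥0∞ := (‖h‖₊ : ℝ≥0∞) with hA
  rcases eq_or_ne A 0 with h0 | h0
  · simp [h0]
  have hAtop : A ≠ ⊤ := ENNReal.coe_ne_top
  have key : A * A ≤ (ENNReal.ofReal CB * H1enorm μ φ ν h) * A := by
    have h1 : A * A = ∫⁻ x, (‖(inner ℂ (φ x) h : ℂ)‖₊ : ℝ≥0∞) ^ 2 ∂μ := by
      rw [hParseval h, sq]
    rw [h1]
    have h2 : ∀ x, (‖(inner ℂ (φ x) h : ℂ)‖₊ : ℝ≥0∞) ^ 2 ≤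
        (ENNReal.ofReal CB * A) * ((‖(inner ℂ (φ x) h : ℂ)‖₊ : ℝ≥0∞) * ENNReal.ofReal (ν x)) := by
      intro x
      have hb : ‖(inner ℂ (φ x) h : ℂ)‖ ≤ CB * ν x * ‖h‖ :=
        le_trans (norm_inner_le_norm _ _)
          (mul_le_mul_of_nonneg_right (hφbd x) (norm_nonneg h))
      have hb' : (‖(inner ℂ (φ x) h : ℂ)‖₊ : ℝ≥0∞) ≤
          ENNReal.ofReal CB * ENNReal.ofReal (ν x) * A := by
        rw [← enorm_eq_nnnorm, ← ofReal_norm, hA, ← enorm_eq_nnnorm, ← ofReal_norm]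
        calc ENNReal.ofReal ‖(inner ℂ (φ x) h : ℂ)‖ ≤ ENNReal.ofReal (CB * ν x * ‖h‖) :=
              ENNReal.ofReal_le_ofReal hb
          _ = ENNReal.ofReal CB * ENNReal.ofReal (ν x) * ENNReal.ofReal ‖h‖ := by
              rw [ENNReal.ofReal_mul (mul_nonneg hCB.le (zero_le_one.trans (hν1 x))),
                ENNReal.ofReal_mul hCB.le]
      calc (‖(inner ℂ (φ x) h : ℂ)‖₊ : ℝ≥0∞) ^ 2
          = (‖(inner ℂ (φ x) h : ℂ)‖₊ : ℝ≥0∞) * (‖(inner ℂ (φ x) h : ℂ)‖₊ : ℝ≥0∞) := sq _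
        _ ≤ (ENNReal.ofReal CB * ENNReal.ofReal (ν x) * A) * (‖(inner ℂ (φ x) h : ℂ)‖₊ : ℝ≥0∞) :=
            mul_le_mul_left hb' _
        _ = (ENNReal.ofReal CB * A) * ((‖(inner ℂ (φ x) h : ℂ)‖₊ : ℝ≥0∞) * ENNReal.ofReal (ν x)) := by
            ring
    calc ∫⁻ x, (‖(inner ℂ (φ x) h : ℂ)‖₊ : ℝ≥0∞) ^ 2 ∂μ
        ≤ ∫⁻ x, (ENNReal.ofReal CB * A) *
            ((‖(inner ℂ (φ x) h : ℂ)‖₊ : ℝ≥0∞) * ENNReal.ofReal (ν x)) ∂μ := lintegral_mono h2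
      _ = (ENNReal.ofReal CB * A) * H1enorm μ φ ν h :=
          lintegral_const_mul' _ _ (ENNReal.mul_ne_top ENNReal.ofReal_ne_top hAtop)
      _ = (ENNReal.ofReal CB * H1enorm μ φ ν h) * A := by ring
  exact (ENNReal.mul_le_mul_iff_left h0 hAtop).mp key

lemma H1fatou (hVmeas : ∀ f : H, Measurable fun x => (inner ℂ (φ x) f : ℂ))
    (hνmeas : Measurable ν) (h g : H) (f : ℕ → H)
    (hconv : Tendsto f atTop (𝓝 g)) :
    H1enorm μ φ ν (h - g) ≤ liminf (fun n => H1enorm μ φ ν (h - f n)) atTop := by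
  have hpt : ∀ x, (‖(inner ℂ (φ x) (h - g) : ℂ)‖₊ : ℝ≥0∞) * ENNReal.ofReal (ν x) =
      liminf (fun n => (‖(inner ℂ (φ x) (h - f n) : ℂ)‖₊ : ℝ≥0∞) * ENNReal.ofReal (ν x)) atTop := by
    intro x
    have h1 : Tendsto (fun n => (inner ℂ (φ x) (h - f n) : ℂ)) atTop (𝓝 (inner ℂ (φ x) (h - g))) :=
      Tendsto.inner tendsto_const_nhds (tendsto_const_nhds.sub hconv)
    have h2 : Tendsto (fun n => (‖(inner ℂ (φ x) (h - f n) : ℂ)‖₊ : ℝ≥0∞) * ENNReal.ofReal (ν x))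
        atTop (𝓝 ((‖(inner ℂ (φ x) (h - g) : ℂ)‖₊ : ℝ≥0∞) * ENNReal.ofReal (ν x))) :=
      ENNReal.Tendsto.mul_const (ENNReal.tendsto_coe.2 h1.nnnorm) (Or.inr ENNReal.ofReal_ne_top)
    exact (h2.liminf_eq).symm
  calc H1enorm μ φ ν (h - g)
      = ∫⁻ x, liminf (fun n => (‖(inner ℂ (φ x) (h - f n) : ℂ)‖₊ : ℝ≥0∞) *
          ENNReal.ofReal (ν x)) atTop ∂μ := by
        unfold H1enorm; exact lintegral_congr fun x => hpt x
    _ ≤ liminf (fun n => H1enorm μ φ ν (h - f n)) atTop :=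
        lintegral_liminf_le fun n => H1meas hVmeas hνmeas (h - f n)

end lems

/-- Under condition (F): (a) `H¹_ν` is complete (a Banach space);
(b) `‖h‖_H ≤ C_B ‖h‖_{H¹_ν}`, so `H¹_ν ↪ H` continuously; (c) `H¹_ν` is dense in `H`. -/
theorem H1nu_banach_embed_dense
    [BorelSpace X] [T2Space X] [LocallyCompactSpace X] [SigmaCompactSpace X]
    [CompleteSpace H] [TopologicalSpace.SeparableSpace H]
    (μ : Measure X) [IsFiniteMeasureOnCompacts μ]
    (hsupp : ∀ V : Set X, IsOpen V → V.Nonempty → 0 < μ V)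
    (φ : X → H)
    (hVmeas : ∀ f : H, Measurable fun x => (inner ℂ (φ x) f : ℂ))
    (hParseval : ∀ f : H,
      ∫⁻ x, (‖(inner ℂ (φ x) f : ℂ)‖₊ : ℝ≥0∞) ^ 2 ∂μ = (‖f‖₊ : ℝ≥0∞) ^ 2)
    (ν : X → ℝ) (hν1 : ∀ x, 1 ≤ ν x) (hνmeas : Measurable ν)
    (CB : ℝ) (hCB : 0 < CB) (hφbd : ∀ x, ‖φ x‖ ≤ CB * ν x)
    (hRAm : AmNormC μ ν (frameKer φ) ≠ ⊤)
    (hφH1 : ∀ x, H1enorm μ φ ν (φ x) ≠ ⊤) :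
    -- (a) completeness of `H¹_ν`
    (∀ f : ℕ → H, (∀ n, H1enorm μ φ ν (f n) ≠ ⊤) →
      Tendsto (fun q : ℕ × ℕ => H1enorm μ φ ν (f q.1 - f q.2)) atTop (nhds 0) →
      ∃ g : H, H1enorm μ φ ν g ≠ ⊤ ∧
        Tendsto (fun n => H1enorm μ φ ν (f n - g)) atTop (nhds 0)) ∧
    -- (b) continuity of the embedding `H¹_ν ↪ H`
    (∀ h : H, H1enorm μ φ ν h ≠ ⊤ →
      (‖h‖₊ : ℝ≥0∞) ≤ ENNReal.ofReal CB * H1enorm μ φ ν h) ∧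
    -- (c) density of `H¹_ν` in `H`
    Dense {h : H | H1enorm μ φ ν h ≠ ⊤} := by
  have embed := H1embed μ φ ν hParseval hν1 CB hCB hφbd
  refine ⟨?_, fun h _ => embed h, ?_⟩
  · -- (a) completeness
    intro f hfin hCauchy
    -- f is Cauchy in H
    have hnorm0 : Tendsto (fun q : ℕ × ℕ => (‖f q.1 - f q.2‖₊ : ℝ≥0∞)) atTop (𝓝 0) := by
      have hub : Tendsto (fun q : ℕ × ℕ => ENNReal.ofReal CB * H1enorm μ φ ν (f q.1 - f q.2))
          atTop (𝓝 (ENNReal.ofReal CB * 0)) :=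
        ENNReal.Tendsto.const_mul hCauchy (Or.inr ENNReal.ofReal_ne_top)
      rw [mul_zero] at hub
      exact tendsto_of_tendsto_of_tendsto_of_le_of_le tendsto_const_nhds hub
        (fun q => by positivity) (fun q => embed _)
    have hCS : CauchySeq f := by
      rw [cauchySeq_iff_tendsto_dist_atTop_0]
      have hreal := (ENNReal.tendsto_toReal (show (0:ℝ≥0∞) ≠ ⊤ by simp)).comp hnorm0
      simpa [Function.comp_def, dist_eq_norm] using hreal
    obtain ⟨g, hg⟩ := cauchySeq_tendsto_of_complete hCS
    -- key: H1enorm (f m - g) ≤ liminf_n H1enorm (f m - f n)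
    have hkey : ∀ m, H1enorm μ φ ν (f m - g) ≤
        liminf (fun n => H1enorm μ φ ν (f m - f n)) atTop := fun m =>
      H1fatou μ φ ν hVmeas hνmeas (f m) g f hg
    have hT : Tendsto (fun m => H1enorm μ φ ν (f m - g)) atTop (𝓝 0) := by
      rw [ENNReal.tendsto_atTop_zero]
      intro ε hε
      obtain ⟨N, hN⟩ := (ENNReal.tendsto_atTop_zero.1 hCauchy) ε hε
      refine ⟨max N.1 N.2, fun m hm => ?_⟩
      refine le_trans (hkey m) (liminf_le_of_frequently_le ?_)
      refine Eventually.frequently (eventually_atTop.2 ⟨max N.1 N.2, fun n hn => ?_⟩)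
      exact hN (m, n) ⟨le_trans (le_max_left _ _) hm, le_trans (le_max_right _ _) hn⟩
    refine ⟨g, ?_, hT⟩
    obtain ⟨m, hm⟩ := (ENNReal.tendsto_atTop_zero.1 hT) 1 one_pos
    have h1 : H1enorm μ φ ν (f m - g) ≤ 1 := hm m le_rfl
    have : H1enorm μ φ ν g ≤ H1enorm μ φ ν (f m) + H1enorm μ φ ν (f m - g) := by
      have := H1sub μ φ ν hVmeas hνmeas (f m) (f m - g)
      simpa using this
    exact ne_top_of_le_ne_top (ENNReal.add_ne_top.2 ⟨hfin m, ne_top_of_le_ne_top ENNReal.one_ne_top h1⟩)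
      this
  · -- (c) density
    set S : Submodule ℂ H := Submodule.span ℂ (Set.range φ) with hS
    have hsub : (S : Set H) ⊆ {h : H | H1enorm μ φ ν h ≠ ⊤} := by
      intro h hh
      induction hh using Submodule.span_induction with
      | mem x hx => obtain ⟨y, rfl⟩ := hx; exact hφH1 y
      | zero => simp [H1zero]
      | add x y hx hy ihx ihy =>
          exact ne_top_of_le_ne_top (ENNReal.add_ne_top.2 ⟨ihx, ihy⟩)
            (H1add μ φ ν hVmeas hνmeas x y)
      | smul a x hx ih =>
          simp only [Set.mem_setOf_eq] at ih ⊢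
          rw [H1smul]
          exact ENNReal.mul_ne_top ENNReal.coe_ne_top ih
    have hdense : Dense (S : Set H) := by
      rw [Submodule.dense_iff_topologicalClosure_eq_top,
        Submodule.topologicalClosure_eq_top_iff]
      · rw [Submodule.eq_bot_iff]
        intro v hv
        have hv' : ∀ x, (inner ℂ (φ x) v : ℂ) = 0 := fun x =>
          (Submodule.mem_orthogonal _ _).1 hv (φ x) (Submodule.subset_span ⟨x, rfl⟩)
        have : (‖v‖₊ : ℝ≥0∞) ^ 2 = 0 := by
          rw [← hParseval v]
          simp [hv']
        simpa using this
    exact hdense.mono hsub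
end
end
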